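/- Consider N > 2 sheep with differentiable trajectories x_1,...,x_N : [0,∞) → ℝ² and a continuous shepherd trajectory y : [0,∞) → ℝ², satisfying the swarm dynamics ẋ_i(t) = Σ_{j≠i} φ_a(x_i(t)−x_j(t)) + Σ_{j≠i} φ_b(x_i(t)−x_j(t)) + f_y(x_i(t), y(t)) at every time t at which the sheep positions are pairwise distinct. Suppose the initial positions are pairwise distinct, i.e., x_i(0) ≠ x_j(0) for all i ≠ j, suppose ℓ_y ≤ 1, and suppose the maximum shepherd force f_y^max = γ₁/ℓ_y satisfies f_y^max < M_b. Then no finite-time collision occurs: there is no time t₁ > 0 such that the sheep positions are pairwise distinct on [0, t₁), the dynamics hold on [0, t₁), and there exist i ≠ j and a point p ∈ ℝ² with lim_{t→t₁⁻} x_i(t) = lim_{t→t₁⁻} x_j(t) = p (where all sheep whose mutual distances tend to 0 as t→t₁⁻ tend to the same point p). Consequently x_i(t) ≠ x_j(t) for all distinct pairs (i,j) and all t > 0. -/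

import Mathlib

open scoped RealInnerProductSpace

noncomputable section

/-- The plane ℝ². -/
abbrev E2 : Type := EuclideanSpace ℝ (Fin 2)

/-- Attraction function `φ_a(x) = -m_a x`. -/
def phiA (ma : ℝ) (v : E2) : E2 := (-ma) • v

/-- Bounded repulsion function `φ_b` (with `M_b = m_b / ℓ_b`). -/
def phiB (mb lb : ℝ) (v : E2) : E2 :=
  if lb < ‖v‖ then (mb / ‖v‖ ^ 2) • v else ((mb / lb) / ‖v‖) • v

/-- The function `g` with `g(0) = 0` and `g(d) = exp(-1/d)` for `d ≠ 0`. -/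
def gfun (d : ℝ) : ℝ := if d = 0 then 0 else Real.exp (-(1 / d))

/- Shepherd-to-sheep force `f_y` (with `γ₂ = γ₁ exp(1/ℓ_y)`), `f_y(y, y) = 0`. -/
open Classical in
def fy (γ1 ly : ℝ) (x y : E2) : E2 :=
  if x = y then 0
  else if ly < ‖x - y‖ then (γ1 / ‖x - y‖ ^ 2) • (x - y)
  else (γ1 * Real.exp (1 / ly) * gfun ‖x - y‖ / ‖x - y‖ ^ 2) • (x - y)

lemma phiB_zero (mb lb : ℝ) : phiB mb lb 0 = 0 := by
  simp [phiB]

lemma phiB_neg (mb lb : ℝ) (v : E2) : phiB mb lb (-v) = - phiB mb lb v := by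
  rw [phiB, phiB, norm_neg]
  split_ifs <;> simp

lemma norm_phiB_le (mb lb : ℝ) (hmb : 0 < mb) (hlb : 0 < lb) (v : E2) :
    ‖phiB mb lb v‖ ≤ mb / lb := by
  rcases eq_or_ne v 0 with rfl | hv
  · simp [phiB_zero]; positivity
  have hv' : 0 < ‖v‖ := norm_pos_iff.2 hv
  rw [phiB]
  split_ifs with h
  · rw [norm_smul, Real.norm_eq_abs, abs_of_nonneg (by positivity)]
    rw [div_mul_eq_mul_div, pow_two]
    rw [div_le_div_iff₀ (by positivity) hlb]
    nlinarith [mul_pos hmb hv']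
  · rw [norm_smul, Real.norm_eq_abs, abs_of_nonneg (by positivity)]
    rw [div_mul_eq_mul_div, mul_div_assoc, div_self (ne_of_gt hv'), mul_one]

lemma inner_phiB (mb lb : ℝ) (hlb : 0 < lb) (v : E2) (hv : v ≠ 0) (hle : ‖v‖ ≤ lb) :
    ⟪v, phiB mb lb v⟫ = (mb / lb) * ‖v‖ := by
  have hv' : 0 < ‖v‖ := norm_pos_iff.2 hv
  rw [phiB, if_neg (not_lt.2 hle), real_inner_smul_right, real_inner_self_eq_norm_sq]
  field_simp

lemma exp_aux (s t : ℝ) (ht : 1 ≤ t) (hst : t ≤ s) :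
    s * Real.exp (-s) ≤ t * Real.exp (-t) := by
  have h1 : s ≤ t * Real.exp (s - t) := by
    have h2 := Real.add_one_le_exp (s - t)
    nlinarith [mul_le_mul_of_nonneg_left h2 (by linarith : (0:ℝ) ≤ t)]
  calc s * Real.exp (-s) ≤ (t * Real.exp (s - t)) * Real.exp (-s) := by
        exact mul_le_mul_of_nonneg_right h1 (Real.exp_pos _).le
    _ = t * Real.exp (-t) := by
        rw [mul_assoc, ← Real.exp_add]; ring_nf

lemma norm_fy_le (γ1 ly : ℝ) (hγ1 : 0 < γ1) (hly : 0 < ly) (hly1 : ly ≤ 1) (x y : E2) :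
    ‖fy γ1 ly x y‖ ≤ γ1 / ly := by
  classical
  rw [fy]
  split_ifs with h1 h2
  · simp; positivity
  · have hd : 0 < ‖x - y‖ := by
      rw [norm_pos_iff, sub_ne_zero]; exact h1
    rw [norm_smul, Real.norm_eq_abs, abs_of_nonneg (by positivity), div_mul_eq_mul_div,
      pow_two]
    rw [div_le_div_iff₀ (by positivity) hly]
    nlinarith [mul_pos hγ1 hd]
  · have hd : 0 < ‖x - y‖ := by
      rw [norm_pos_iff, sub_ne_zero]; exact h1
    push_neg at h2
    have hgd : gfun ‖x - y‖ = Real.exp (-(1 / ‖x - y‖)) := by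
      rw [gfun, if_neg (ne_of_gt hd)]
    rw [norm_smul, Real.norm_eq_abs, hgd, abs_of_nonneg (by positivity),
      div_mul_eq_mul_div, pow_two]
    have ht1 : 1 ≤ 1 / ly := by rw [le_div_iff₀ hly]; linarith
    have hst : 1 / ly ≤ 1 / ‖x - y‖ := by
      apply div_le_div_of_nonneg_left (by norm_num) hd h2
    have key := exp_aux (1 / ‖x - y‖) (1 / ly) ht1 hst
    have hexp : Real.exp (1 / ly) * Real.exp (-(1 / ly)) = 1 := by
      rw [← Real.exp_add]; simp
    calc γ1 * Real.exp (1 / ly) * Real.exp (-(1 / ‖x - y‖)) * ‖x - y‖ / (‖x - y‖ * ‖x - y‖)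
        = γ1 * Real.exp (1 / ly) * ((1 / ‖x - y‖) * Real.exp (-(1 / ‖x - y‖))) := by
          field_simp
      _ ≤ γ1 * Real.exp (1 / ly) * ((1 / ly) * Real.exp (-(1 / ly))) := by
          apply mul_le_mul_of_nonneg_left key (by positivity)
      _ = γ1 / ly := by
          field_simp; ring_nf
          rw [← Real.exp_add]; simp


def hfun (mb lb s : ℝ) : ℝ := if lb < s then mb / s else mb / lb

lemma phiB_eq (mb lb : ℝ) (v : E2) :
    phiB mb lb v = ((hfun mb lb ‖v‖) / ‖v‖) • v := by
  rw [phiB, hfun]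
  split_ifs with h
  · congr 1
    rw [pow_two, div_div]
  · rfl

lemma hfun_nonneg (mb lb s : ℝ) (hmb : 0 < mb) (hlb : 0 < lb) (hs : 0 < s) :
    0 ≤ hfun mb lb s := by
  rw [hfun]; split_ifs <;> positivity

lemma hfun_le (mb lb s : ℝ) (hmb : 0 < mb) (hlb : 0 < lb) (hs : 0 < s) :
    hfun mb lb s ≤ mb / lb := by
  rw [hfun]; split_ifs with h
  · exact div_le_div_of_nonneg_left hmb.le hlb (le_of_lt h)
  · exact le_refl _

lemma hfun_lip (mb lb r a b : ℝ) (hmb : 0 < mb) (hlb : 0 < lb) (hr : 0 < r)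
    (ha : r ≤ a) (hb : r ≤ b) :
    |hfun mb lb a - hfun mb lb b| ≤ mb / r ^ 2 * |a - b| := by
  have hcpos : 0 < mb / r ^ 2 := by positivity
  have main : ∀ x y : ℝ, r ≤ x → r ≤ y → x ≤ y →
      hfun mb lb y ≤ hfun mb lb x ∧ hfun mb lb x - hfun mb lb y ≤ mb / r ^ 2 * (y - x) := by
    intro x y hx hy hxy
    have hx0 : 0 < x := lt_of_lt_of_le hr hx
    have hy0 : 0 < y := lt_of_lt_of_le hr hy
    by_cases h2 : lb < x
    · have h1 : lb < y := lt_of_lt_of_le h2 hxy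
      rw [hfun, hfun, if_pos h1, if_pos h2]
      constructor
      · exact div_le_div_of_nonneg_left hmb.le hx0 hxy
      · rw [div_sub_div _ _ (ne_of_gt hx0) (ne_of_gt hy0), div_le_iff₀ (by positivity)]
        have hxy2 : r ^ 2 ≤ x * y := by nlinarith
        have e1 : mb / r ^ 2 * (y - x) * r ^ 2 = mb * (y - x) := by field_simp
        have e2 : mb / r ^ 2 * (y - x) * r ^ 2 ≤ mb / r ^ 2 * (y - x) * (x * y) := by
          apply mul_le_mul_of_nonneg_left hxy2
          exact mul_nonneg hcpos.le (by linarith)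
        nlinarith [e1, e2]
    · by_cases h1 : lb < y
      · rw [hfun, hfun, if_pos h1, if_neg h2]
        push_neg at h2
        have hrlb : r ≤ lb := le_trans hx h2
        constructor
        · exact div_le_div_of_nonneg_left hmb.le hlb h1.le
        · rw [div_sub_div _ _ (ne_of_gt hlb) (ne_of_gt hy0), div_le_iff₀ (by positivity)]
          have hxy2 : r ^ 2 ≤ lb * y := by nlinarith
          have e1 : mb / r ^ 2 * (y - lb) * r ^ 2 = mb * (y - lb) := by field_simp
          have e2 : mb / r ^ 2 * (y - lb) * r ^ 2 ≤ mb / r ^ 2 * (y - lb) * (lb * y) := by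
            apply mul_le_mul_of_nonneg_left hxy2
            exact mul_nonneg hcpos.le (by linarith)
          have e3 : mb / r ^ 2 * (y - lb) * (lb * y) ≤ mb / r ^ 2 * (y - x) * (lb * y) := by
            apply mul_le_mul_of_nonneg_right _ (by positivity)
            apply mul_le_mul_of_nonneg_left (by linarith) hcpos.le
          nlinarith [e1, e2, e3]
      · rw [hfun, hfun, if_neg h1, if_neg h2]
        exact ⟨le_refl _, by simp; exact mul_nonneg hcpos.le (by linarith)⟩
  rcases le_total a b with h | h
  · obtain ⟨m1, m2⟩ := main a b ha hb h
    rw [abs_of_nonneg (by linarith), abs_of_nonpos (by linarith)]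
    linarith
  · obtain ⟨m1, m2⟩ := main b a hb ha h
    rw [abs_of_nonpos (by linarith), abs_of_nonneg (by linarith)]
    linarith

lemma phiB_lip (mb lb r : ℝ) (hmb : 0 < mb) (hlb : 0 < lb) (hr : 0 < r)
    (u v : E2) (hu : r ≤ ‖u‖) (hv : r ≤ ‖v‖) :
    ‖phiB mb lb u - phiB mb lb v‖ ≤ (mb / r ^ 2 + 2 * (mb / lb) / r) * ‖u - v‖ := by
  set a := ‖u‖ with hA
  set b := ‖v‖ with hB
  have ha0 : 0 < a := lt_of_lt_of_le hr hu
  have hb0 : 0 < b := lt_of_lt_of_le hr hv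
  have hab : |a - b| ≤ ‖u - v‖ := abs_norm_sub_norm_le u v
  have hdecomp : phiB mb lb u - phiB mb lb v =
      (hfun mb lb a) • ((a⁻¹) • u - (b⁻¹) • v) + (hfun mb lb a - hfun mb lb b) • ((b⁻¹) • v) := by
    rw [phiB_eq, phiB_eq, ← hA, ← hB, div_eq_mul_inv, div_eq_mul_inv]
    module
  have hunit : ‖(b⁻¹) • v‖ = 1 := by
    rw [norm_smul, Real.norm_eq_abs, abs_of_pos (inv_pos.2 hb0), ← hB,
      inv_mul_cancel₀ (ne_of_gt hb0)]
  have hudiff : ‖(a⁻¹) • u - (b⁻¹) • v‖ ≤ 2 / r * ‖u - v‖ := by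
    have h2 : (a⁻¹) • u - (b⁻¹) • v = (a⁻¹) • (u - v) + (a⁻¹ - b⁻¹) • v := by module
    rw [h2]
    have h3 : ‖(a⁻¹) • (u - v)‖ = a⁻¹ * ‖u - v‖ := by
      rw [norm_smul, Real.norm_eq_abs, abs_of_pos (inv_pos.2 ha0)]
    have h4 : ‖(a⁻¹ - b⁻¹) • v‖ = |a⁻¹ - b⁻¹| * b := by
      rw [norm_smul, Real.norm_eq_abs, ← hB]
    have h5 : |a⁻¹ - b⁻¹| * b = |b - a| / a := by
      rw [inv_sub_inv (ne_of_gt ha0) (ne_of_gt hb0), abs_div, abs_of_pos (mul_pos ha0 hb0)]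
      field_simp
    calc ‖(a⁻¹) • (u - v) + (a⁻¹ - b⁻¹) • v‖ ≤ ‖(a⁻¹) • (u - v)‖ + ‖(a⁻¹ - b⁻¹) • v‖ :=
          norm_add_le _ _
      _ = a⁻¹ * ‖u - v‖ + |b - a| / a := by rw [h3, h4, h5]
      _ ≤ a⁻¹ * ‖u - v‖ + ‖u - v‖ / a := by
          gcongr
          rw [abs_sub_comm]; exact hab
      _ = 2 / a * ‖u - v‖ := by field_simp; ring
      _ ≤ 2 / r * ‖u - v‖ := by gcongr
  have g1 : hfun mb lb a * ‖(a⁻¹) • u - (b⁻¹) • v‖ ≤ (mb / lb) * (2 / r * ‖u - v‖) :=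
    mul_le_mul (hfun_le mb lb a hmb hlb ha0) hudiff (norm_nonneg _) (by positivity)
  have g2 : |hfun mb lb a - hfun mb lb b| ≤ mb / r ^ 2 * ‖u - v‖ :=
    le_trans (hfun_lip mb lb r a b hmb hlb hr hu hv)
      (mul_le_mul_of_nonneg_left hab (by positivity))
  calc ‖phiB mb lb u - phiB mb lb v‖
      ≤ ‖(hfun mb lb a) • ((a⁻¹) • u - (b⁻¹) • v)‖ +
        ‖(hfun mb lb a - hfun mb lb b) • ((b⁻¹) • v)‖ := by rw [hdecomp]; exact norm_add_le _ _
    _ = hfun mb lb a * ‖(a⁻¹) • u - (b⁻¹) • v‖ + |hfun mb lb a - hfun mb lb b| := by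
        rw [norm_smul, norm_smul, Real.norm_eq_abs, Real.norm_eq_abs, hunit, mul_one,
          abs_of_nonneg (hfun_nonneg mb lb a hmb hlb ha0)]
    _ ≤ (mb / lb) * (2 / r * ‖u - v‖) + mb / r ^ 2 * ‖u - v‖ := by linarith
    _ = (mb / r ^ 2 + 2 * (mb / lb) / r) * ‖u - v‖ := by ring


set_option maxHeartbeats 2000000 in
open Finset in
lemma core_ineq (N : ℕ) (ma mb lb γ1 ly : ℝ) (hma : 0 < ma) (hmb : 0 < mb) (hlb : 0 < lb)
    (hγ1 : 0 < γ1) (hly : 0 < ly) (hly1 : ly ≤ 1)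
    (p : Fin N → E2) (q : E2)
    (hdist : ∀ i j : Fin N, i ≠ j → p i ≠ p j)
    (C : Finset (Fin N)) (hC : 2 ≤ C.card)
    (K ε : ℝ) (hK : 0 ≤ K) (hε : 0 < ε) (hεlb : ε ≤ lb)
    (hsmall : (N : ℝ) * (ma + K) * ε + 2 * (γ1 / ly) ≤ 2 * (mb / lb))
    (hint : ∀ i ∈ C, ∀ j ∈ C, ‖p i - p j‖ ≤ ε)
    (hext : ∀ i ∈ C, ∀ j ∈ C, ∀ k ∉ C,
      ‖phiB mb lb (p i - p k) - phiB mb lb (p j - p k)‖ ≤ K * ‖p i - p j‖) :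
    0 ≤ ∑ i ∈ C, ∑ j ∈ C,
      (⟪p i - p j,
        (((∑ k ∈ Finset.univ.filter (· ≠ i), phiA ma (p i - p k)) +
          (∑ k ∈ Finset.univ.filter (· ≠ i), phiB mb lb (p i - p k)) + fy γ1 ly (p i) q) -
         ((∑ k ∈ Finset.univ.filter (· ≠ j), phiA ma (p j - p k)) +
          (∑ k ∈ Finset.univ.filter (· ≠ j), phiB mb lb (p j - p k)) + fy γ1 ly (p j) q))⟫ : ℝ) := by
  classical
  set Mb := mb / lb with hMb
  have hMb0 : 0 < Mb := by rw [hMb]; positivity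
  have hfilter : ∀ (g : Fin N → E2) (i : Fin N), g i = 0 →
      ∑ k ∈ Finset.univ.filter (· ≠ i), g k = ∑ k, g k := by
    intro g i hg
    rw [Finset.filter_ne', Finset.sum_erase _ hg]
  set vA : Fin N → E2 := fun i => ∑ k, phiA ma (p i - p k) with hvA
  set wI : Fin N → E2 := fun i => ∑ k ∈ C, phiB mb lb (p i - p k) with hwI
  set wE : Fin N → E2 := fun i => ∑ k ∈ Cᶜ, phiB mb lb (p i - p k) with hwE
  set fv : Fin N → E2 := fun i => fy γ1 ly (p i) q with hfv
  have hvel : ∀ i : Fin N,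
      ((∑ k ∈ Finset.univ.filter (· ≠ i), phiA ma (p i - p k)) +
       (∑ k ∈ Finset.univ.filter (· ≠ i), phiB mb lb (p i - p k)) + fy γ1 ly (p i) q)
      = vA i + (wI i + wE i) + fv i := by
    intro i
    have e1 : ∑ k ∈ Finset.univ.filter (· ≠ i), phiA ma (p i - p k) = vA i :=
      hfilter _ i (by simp [phiA])
    have e2 : ∑ k ∈ Finset.univ.filter (· ≠ i), phiB mb lb (p i - p k) = wI i + wE i := by
      rw [hfilter _ i (by simp [phiB_zero])]
      rw [hwI, hwE]
      exact (Finset.sum_add_sum_compl C _).symm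
    rw [e1, e2, hfv]
  have hsummand : ∀ i j : Fin N,
      (⟪p i - p j,
        (((∑ k ∈ Finset.univ.filter (· ≠ i), phiA ma (p i - p k)) +
          (∑ k ∈ Finset.univ.filter (· ≠ i), phiB mb lb (p i - p k)) + fy γ1 ly (p i) q) -
         ((∑ k ∈ Finset.univ.filter (· ≠ j), phiA ma (p j - p k)) +
          (∑ k ∈ Finset.univ.filter (· ≠ j), phiB mb lb (p j - p k)) + fy γ1 ly (p j) q))⟫ : ℝ)
      = ⟪p i - p j, wI i - wI j⟫ +
        (⟪p i - p j, vA i - vA j⟫ + ⟪p i - p j, wE i - wE j⟫ + ⟪p i - p j, fv i - fv j⟫) := by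
    intro i j
    rw [hvel i, hvel j]
    have : vA i + (wI i + wE i) + fv i - (vA j + (wI j + wE j) + fv j)
        = (wI i - wI j) + ((vA i - vA j) + (wE i - wE j) + (fv i - fv j)) := by abel
    rw [this, inner_add_right, inner_add_right, inner_add_right]
  set S : ℝ := ∑ i ∈ C, ∑ k ∈ C, ‖p i - p k‖ with hS
  have hS0 : 0 ≤ S := by
    apply Finset.sum_nonneg; intro i _
    exact Finset.sum_nonneg fun k _ => norm_nonneg _
  have hTBint : (2 : ℝ) * Mb * S ≤ ∑ i ∈ C, ∑ j ∈ C, (⟪p i - p j, wI i - wI j⟫ : ℝ) := by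
    have step1 : ∑ i ∈ C, ∑ j ∈ C, (⟪p i - p j, wI i - wI j⟫ : ℝ)
        = 2 * ∑ i ∈ C, ∑ j ∈ C, (⟪p i - p j, wI i⟫ : ℝ) := by
      have e : ∀ i j : Fin N, (⟪p i - p j, wI i - wI j⟫ : ℝ)
          = ⟪p i - p j, wI i⟫ - ⟪p i - p j, wI j⟫ := fun i j => inner_sub_right _ _ _
      simp only [e, Finset.sum_sub_distrib]
      have anti : ∑ i ∈ C, ∑ j ∈ C, (⟪p i - p j, wI j⟫ : ℝ)
          = - ∑ i ∈ C, ∑ j ∈ C, (⟪p i - p j, wI i⟫ : ℝ) := by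
        calc ∑ i ∈ C, ∑ j ∈ C, (⟪p i - p j, wI j⟫ : ℝ)
            = ∑ j ∈ C, ∑ i ∈ C, (⟪p i - p j, wI j⟫ : ℝ) := Finset.sum_comm
          _ = ∑ j ∈ C, ∑ i ∈ C, -(⟪p j - p i, wI j⟫ : ℝ) := by
              apply Finset.sum_congr rfl; intro jj _
              apply Finset.sum_congr rfl; intro ii _
              rw [← inner_neg_left]; congr 1; abel
          _ = - ∑ j ∈ C, ∑ i ∈ C, (⟪p j - p i, wI j⟫ : ℝ) := by
              rw [← Finset.sum_neg_distrib]
              exact Finset.sum_congr rfl fun jj _ => Finset.sum_neg_distrib _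
      rw [anti]; ring
    have hAj : ∀ j : Fin N, ∑ i ∈ C, (⟪p i - p j, wI i⟫ : ℝ) = Mb * S / 2 := by
      intro j
      have expand : ∑ i ∈ C, (⟪p i - p j, wI i⟫ : ℝ)
          = ∑ i ∈ C, ∑ k ∈ C, (⟪p i - p j, phiB mb lb (p i - p k)⟫ : ℝ) := by
        apply Finset.sum_congr rfl; intro i _
        rw [hwI, inner_sum]
      rw [expand]
      have comm : ∑ i ∈ C, ∑ k ∈ C, (⟪p i - p j, phiB mb lb (p i - p k)⟫ : ℝ)
          = ∑ i ∈ C, ∑ k ∈ C, (⟪p k - p j, phiB mb lb (p k - p i)⟫ : ℝ) :=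
        Finset.sum_comm
      have doub : (2:ℝ) * ∑ i ∈ C, ∑ k ∈ C, (⟪p i - p j, phiB mb lb (p i - p k)⟫ : ℝ)
          = Mb * S := by
        calc (2:ℝ) * ∑ i ∈ C, ∑ k ∈ C, (⟪p i - p j, phiB mb lb (p i - p k)⟫ : ℝ)
            = ∑ i ∈ C, ∑ k ∈ C, ((⟪p i - p j, phiB mb lb (p i - p k)⟫ : ℝ) +
                (⟪p k - p j, phiB mb lb (p k - p i)⟫ : ℝ)) := by
              simp only [Finset.sum_add_distrib]
              rw [← comm]; ring
          _ = ∑ i ∈ C, ∑ k ∈ C, Mb * ‖p i - p k‖ := by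
              apply Finset.sum_congr rfl; intro i hi
              apply Finset.sum_congr rfl; intro k hk
              have hodd : phiB mb lb (p k - p i) = - phiB mb lb (p i - p k) := by
                rw [← phiB_neg]; congr 1; abel
              rw [hodd, inner_neg_right, ← sub_eq_add_neg, ← inner_sub_left]
              have hsub : p i - p j - (p k - p j) = p i - p k := by abel
              rw [hsub]
              rcases eq_or_ne i k with rfl | hik
              · simp
              · rw [inner_phiB mb lb hlb _ (sub_ne_zero.2 (hdist i k hik))
                  (le_trans (hint i hi k hk) hεlb), hMb]
          _ = Mb * S := by
              rw [hS, Finset.mul_sum]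
              exact Finset.sum_congr rfl fun i _ => (Finset.mul_sum _ _ _).symm
      linarith
    have tot : ∑ i ∈ C, ∑ j ∈ C, (⟪p i - p j, wI i⟫ : ℝ) = (C.card : ℝ) * (Mb * S / 2) := by
      rw [Finset.sum_comm]
      calc ∑ j ∈ C, ∑ i ∈ C, (⟪p i - p j, wI i⟫ : ℝ)
          = ∑ j ∈ C, (Mb * S / 2) := Finset.sum_congr rfl fun j _ => hAj j
        _ = (C.card : ℝ) * (Mb * S / 2) := by rw [Finset.sum_const, nsmul_eq_mul]
    rw [step1, tot]
    have h2 : (2:ℝ) ≤ (C.card : ℝ) := by exact_mod_cast hC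
    nlinarith [mul_nonneg hMb0.le hS0]
  set c : ℝ := (N : ℝ) * (ma + K) * ε + 2 * (γ1 / ly) with hc
  have hrest : ∀ i ∈ C, ∀ j ∈ C,
      -(c * ‖p i - p j‖) ≤
      (⟪p i - p j, vA i - vA j⟫ : ℝ) + ⟪p i - p j, wE i - wE j⟫ + ⟪p i - p j, fv i - fv j⟫ := by
    intro i hi j hj
    have hdij : ‖p i - p j‖ ≤ ε := hint i hi j hj
    have hd0 : (0:ℝ) ≤ ‖p i - p j‖ := norm_nonneg _
    have hN0 : (0:ℝ) ≤ (N : ℝ) := Nat.cast_nonneg N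
    have hvAij : vA i - vA j = (-(ma * N)) • (p i - p j) := by
      simp only [hvA]
      rw [← Finset.sum_sub_distrib]
      have e : ∀ k : Fin N, phiA ma (p i - p k) - phiA ma (p j - p k) = (-ma) • (p i - p j) := by
        intro k
        rw [phiA, phiA, ← smul_sub]
        congr 1
        abel
      rw [Finset.sum_congr rfl fun k _ => e k, Finset.sum_const, Finset.card_univ,
        Fintype.card_fin, ← Nat.cast_smul_eq_nsmul ℝ, smul_smul]
      congr 1
      ring
    have t1 : (⟪p i - p j, vA i - vA j⟫ : ℝ) = -(ma * N) * ‖p i - p j‖ ^ 2 := by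
      rw [hvAij, real_inner_smul_right, real_inner_self_eq_norm_sq]
    have t1b : -(ma * N * ε * ‖p i - p j‖) ≤ (⟪p i - p j, vA i - vA j⟫ : ℝ) := by
      rw [t1]
      nlinarith [mul_le_mul_of_nonneg_left hdij
        (mul_nonneg (mul_nonneg hma.le hN0) hd0)]
    have wEdiff : wE i - wE j = ∑ k ∈ Cᶜ, (phiB mb lb (p i - p k) - phiB mb lb (p j - p k)) := by
      simp only [hwE, Finset.sum_sub_distrib]
    have t3norm : ‖wE i - wE j‖ ≤ (N:ℝ) * K * ‖p i - p j‖ := by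
      rw [wEdiff]
      calc ‖∑ k ∈ Cᶜ, (phiB mb lb (p i - p k) - phiB mb lb (p j - p k))‖
          ≤ ∑ k ∈ Cᶜ, ‖phiB mb lb (p i - p k) - phiB mb lb (p j - p k)‖ := norm_sum_le _ _
        _ ≤ ∑ _k ∈ Cᶜ, K * ‖p i - p j‖ :=
            Finset.sum_le_sum fun k hk => hext i hi j hj k (Finset.mem_compl.1 hk)
        _ = ((Cᶜ).card : ℝ) * (K * ‖p i - p j‖) := by rw [Finset.sum_const, nsmul_eq_mul]
        _ ≤ (N:ℝ) * K * ‖p i - p j‖ := by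
            have hcard : ((Cᶜ).card : ℝ) ≤ (N : ℝ) := by
              have h := Finset.card_le_univ (Cᶜ)
              have h2 : (Cᶜ).card ≤ N := by simpa using h
              exact_mod_cast h2
            nlinarith [mul_nonneg hK hd0]
    have t3 : -((N:ℝ) * K * ε * ‖p i - p j‖) ≤ (⟪p i - p j, wE i - wE j⟫ : ℝ) := by
      have key : |(⟪p i - p j, wE i - wE j⟫ : ℝ)| ≤ ‖p i - p j‖ * ((N:ℝ) * K * ‖p i - p j‖) :=
        le_trans (abs_real_inner_le_norm _ _) (mul_le_mul_of_nonneg_left t3norm hd0)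
      have key2 : ‖p i - p j‖ * ((N:ℝ) * K * ‖p i - p j‖) ≤ (N:ℝ) * K * ε * ‖p i - p j‖ := by
        nlinarith [mul_le_mul_of_nonneg_left hdij (mul_nonneg (mul_nonneg hN0 hK) hd0)]
      linarith [neg_abs_le (⟪p i - p j, wE i - wE j⟫ : ℝ)]
    have t4 : -((2 * (γ1 / ly)) * ‖p i - p j‖) ≤ (⟪p i - p j, fv i - fv j⟫ : ℝ) := by
      have hn : ‖fv i - fv j‖ ≤ 2 * (γ1 / ly) := by
        calc ‖fv i - fv j‖ ≤ ‖fv i‖ + ‖fv j‖ := norm_sub_le _ _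
          _ ≤ γ1 / ly + γ1 / ly := by
              simp only [hfv]
              exact add_le_add (norm_fy_le γ1 ly hγ1 hly hly1 _ _)
                (norm_fy_le γ1 ly hγ1 hly hly1 _ _)
          _ = 2 * (γ1 / ly) := by ring
      have key : |(⟪p i - p j, fv i - fv j⟫ : ℝ)| ≤ ‖p i - p j‖ * (2 * (γ1 / ly)) :=
        le_trans (abs_real_inner_le_norm _ _) (mul_le_mul_of_nonneg_left hn hd0)
      rw [mul_comm] at key
      linarith [neg_abs_le (⟪p i - p j, fv i - fv j⟫ : ℝ)]
    rw [hc]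
    nlinarith [t1b, t3, t4]
  have expand_total : ∑ i ∈ C, ∑ j ∈ C,
      (⟪p i - p j,
        (((∑ k ∈ Finset.univ.filter (· ≠ i), phiA ma (p i - p k)) +
          (∑ k ∈ Finset.univ.filter (· ≠ i), phiB mb lb (p i - p k)) + fy γ1 ly (p i) q) -
         ((∑ k ∈ Finset.univ.filter (· ≠ j), phiA ma (p j - p k)) +
          (∑ k ∈ Finset.univ.filter (· ≠ j), phiB mb lb (p j - p k)) + fy γ1 ly (p j) q))⟫ : ℝ)
      = (∑ i ∈ C, ∑ j ∈ C, (⟪p i - p j, wI i - wI j⟫ : ℝ))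
        + ∑ i ∈ C, ∑ j ∈ C, ((⟪p i - p j, vA i - vA j⟫ : ℝ) + ⟪p i - p j, wE i - wE j⟫
            + ⟪p i - p j, fv i - fv j⟫) := by
    calc ∑ i ∈ C, ∑ j ∈ C,
      (⟪p i - p j,
        (((∑ k ∈ Finset.univ.filter (· ≠ i), phiA ma (p i - p k)) +
          (∑ k ∈ Finset.univ.filter (· ≠ i), phiB mb lb (p i - p k)) + fy γ1 ly (p i) q) -
         ((∑ k ∈ Finset.univ.filter (· ≠ j), phiA ma (p j - p k)) +
          (∑ k ∈ Finset.univ.filter (· ≠ j), phiB mb lb (p j - p k)) + fy γ1 ly (p j) q))⟫ : ℝ)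
        = ∑ i ∈ C, ∑ j ∈ C, ((⟪p i - p j, wI i - wI j⟫ : ℝ) +
            ((⟪p i - p j, vA i - vA j⟫ : ℝ) + ⟪p i - p j, wE i - wE j⟫
              + ⟪p i - p j, fv i - fv j⟫)) :=
          Finset.sum_congr rfl fun i _ => Finset.sum_congr rfl fun j _ => hsummand i j
      _ = _ := by simp only [Finset.sum_add_distrib]
  have hrest_sum : -(c * S) ≤ ∑ i ∈ C, ∑ j ∈ C, ((⟪p i - p j, vA i - vA j⟫ : ℝ)
      + ⟪p i - p j, wE i - wE j⟫ + ⟪p i - p j, fv i - fv j⟫) := by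
    have e : -(c * S) = ∑ i ∈ C, ∑ j ∈ C, -(c * ‖p i - p j‖) := by
      rw [hS, Finset.mul_sum, ← Finset.sum_neg_distrib]
      apply Finset.sum_congr rfl; intro i _
      rw [Finset.mul_sum, ← Finset.sum_neg_distrib]
    rw [e]
    apply Finset.sum_le_sum; intro i hi
    apply Finset.sum_le_sum; intro j hj
    exact hrest i hi j hj
  rw [expand_total]
  have h2Mb : c ≤ 2 * Mb := hsmall
  nlinarith [hTBint, hrest_sum, mul_nonneg (sub_nonneg.2 h2Mb) hS0]



set_option maxHeartbeats 4000000 in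
/-- Theorem 1, collision-free condition: if the sheep start at
pairwise distinct positions, `ℓ_y ≤ 1`, and the maximum shepherd force
`f_y^max = γ₁/ℓ_y` satisfies `f_y^max < M_b = m_b/ℓ_b`, then no finite-time
collision occurs, and consequently `x_i(t) ≠ x_j(t)` for all `i ≠ j`, `t > 0`. -/
theorem statement0 (N : ℕ) (hN : 2 < N)
    (ma mb lb γ1 ly : ℝ)
    (hma : 0 < ma) (hmb : 0 < mb) (hlb : 0 < lb) (hγ1 : 0 < γ1) (hly : 0 < ly)
    (hly1 : ly ≤ 1)
    (hforce : γ1 / ly < mb / lb)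
    (x : Fin N → ℝ → E2) (y : ℝ → E2)
    (hdiff : ∀ i, DifferentiableOn ℝ (x i) (Set.Ici 0))
    (hy : ContinuousOn y (Set.Ici 0))
    (hdyn : ∀ (i : Fin N) (t : ℝ), 0 ≤ t →
      (∀ j k : Fin N, j ≠ k → x j t ≠ x k t) →
      HasDerivWithinAt (x i)
        ((∑ j ∈ Finset.univ.filter (· ≠ i), phiA ma (x i t - x j t)) +
          (∑ j ∈ Finset.univ.filter (· ≠ i), phiB mb lb (x i t - x j t)) +
          fy γ1 ly (x i t) (y t)) (Set.Ici 0) t)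
    (hinit : ∀ i j : Fin N, i ≠ j → x i 0 ≠ x j 0) :
    (¬ ∃ t₁ : ℝ, 0 < t₁ ∧
      -- the sheep positions are pairwise distinct on [0, t₁)
      (∀ t ∈ Set.Ico (0 : ℝ) t₁, ∀ j k : Fin N, j ≠ k → x j t ≠ x k t) ∧
      -- the dynamics hold on [0, t₁)
      (∀ (i : Fin N), ∀ t ∈ Set.Ico (0 : ℝ) t₁,
        HasDerivWithinAt (x i)
          ((∑ j ∈ Finset.univ.filter (· ≠ i), phiA ma (x i t - x j t)) +
            (∑ j ∈ Finset.univ.filter (· ≠ i), phiB mb lb (x i t - x j t)) +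
            fy γ1 ly (x i t) (y t)) (Set.Ici 0) t) ∧
      -- two distinct sheep collide at a point p as t → t₁⁻, and every sheep
      -- whose mutual distance to a colliding sheep tends to 0 tends to p
      (∃ i j : Fin N, i ≠ j ∧ ∃ p : E2,
        Filter.Tendsto (x i) (nhdsWithin t₁ (Set.Iio t₁)) (nhds p) ∧
        Filter.Tendsto (x j) (nhdsWithin t₁ (Set.Iio t₁)) (nhds p) ∧
        (∀ k l : Fin N, k ≠ l →
          Filter.Tendsto (fun t => ‖x k t - x l t‖) (nhdsWithin t₁ (Set.Iio t₁))
            (nhds 0) →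
          Filter.Tendsto (x k) (nhdsWithin t₁ (Set.Iio t₁)) (nhds p) ∧
            Filter.Tendsto (x l) (nhdsWithin t₁ (Set.Iio t₁)) (nhds p)))) ∧
    -- consequently, no two sheep ever occupy the same position
    (∀ t : ℝ, 0 < t → ∀ i j : Fin N, i ≠ j → x i t ≠ x j t) := by
  classical
  have hcont : ∀ i : Fin N, ContinuousOn (x i) (Set.Ici 0) := fun i => (hdiff i).continuousOn
  have main : ∀ t : ℝ, 0 < t → ∀ i j : Fin N, i ≠ j → x i t ≠ x j t := by
    by_contra hcol
    push_neg at hcol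
    obtain ⟨ts, hts, is, js, hijs, heqs⟩ := hcol
    set S : Set ℝ := {t : ℝ | 0 ≤ t ∧ ∃ i j : Fin N, i ≠ j ∧ x i t = x j t} with hSdef
    have hSne : S.Nonempty := ⟨ts, hts.le, is, js, hijs, heqs⟩
    have hSbdd : BddBelow S := ⟨0, fun t ht => ht.1⟩
    have hSclosed : IsClosed S := by
      have hSeq : S = ⋃ pr : Fin N × Fin N,
          {t : ℝ | 0 ≤ t ∧ pr.1 ≠ pr.2 ∧ x pr.1 t = x pr.2 t} := by
        ext t
        simp only [hSdef, Set.mem_setOf_eq, Set.mem_iUnion]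
        constructor
        · rintro ⟨ht, i, j, hij, hx⟩; exact ⟨(i, j), ht, hij, hx⟩
        · rintro ⟨⟨i, j⟩, ht, hij, hx⟩; exact ⟨ht, i, j, hij, hx⟩
      rw [hSeq]
      apply isClosed_iUnion_of_finite
      rintro ⟨i, j⟩
      by_cases hij : i = j
      · have : {t : ℝ | 0 ≤ t ∧ i ≠ j ∧ x i t = x j t} = ∅ := by
          ext t; simp [hij]
        rw [this]; exact isClosed_empty
      · have heq2 : {t : ℝ | 0 ≤ t ∧ i ≠ j ∧ x i t = x j t}
            = Set.Ici (0:ℝ) ∩ (fun t => x i t - x j t) ⁻¹' {0} := by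
          ext t
          simp only [Set.mem_setOf_eq, Set.mem_inter_iff, Set.mem_Ici, Set.mem_preimage,
            Set.mem_singleton_iff, sub_eq_zero]
          tauto
        rw [heq2]
        exact ContinuousOn.preimage_isClosed_of_isClosed
          ((hcont i).sub (hcont j)) isClosed_Ici isClosed_singleton
    set t₁ : ℝ := sInf S with ht₁def
    have ht₁S : t₁ ∈ S := hSclosed.csInf_mem hSne hSbdd
    have ht₁0 : 0 ≤ t₁ := ht₁S.1
    obtain ⟨i0, j0, hij0, hcol0⟩ := ht₁S.2
    have ht₁pos : 0 < t₁ := by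
      rcases lt_or_eq_of_le ht₁0 with h | h
      · exact h
      · exact absurd (h ▸ hcol0) (hinit i0 j0 hij0)
    have hsep : ∀ t : ℝ, 0 ≤ t → t < t₁ → ∀ i j : Fin N, i ≠ j → x i t ≠ x j t := by
      intro t ht htlt i j hij hx
      exact absurd (csInf_le hSbdd ⟨ht, i, j, hij, hx⟩) (not_le.2 htlt)
    set L : Filter ℝ := nhdsWithin t₁ (Set.Iio t₁) with hLdef
    haveI hLne : L.NeBot := nhdsLT_neBot t₁
    have hLle : L ≤ nhdsWithin t₁ (Set.Ici 0) := by
      rw [hLdef, nhdsWithin_le_iff, mem_nhdsWithin]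
      exact ⟨Set.Ioi 0, isOpen_Ioi, ht₁pos, fun s hs => Set.mem_Ici.2 (le_of_lt hs.1)⟩
    have tendsto_vals : ∀ k : Fin N, Filter.Tendsto (x k) L (nhds (x k t₁)) :=
      fun k => Filter.Tendsto.mono_left ((hcont k) t₁ ht₁0) hLle
    set C : Finset (Fin N) := Finset.univ.filter (fun k => x k t₁ = x i0 t₁) with hCdef
    have hmemC : ∀ k : Fin N, k ∈ C ↔ x k t₁ = x i0 t₁ := by
      intro k; rw [hCdef]; simp
    have hi0C : i0 ∈ C := (hmemC i0).2 rfl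
    have hj0C : j0 ∈ C := (hmemC j0).2 hcol0.symm
    have hC2 : 2 ≤ C.card := by
      rw [show (2:ℕ) = 1 + 1 by rfl]
      exact Finset.one_lt_card.2 ⟨i0, hi0C, j0, hj0C, hij0⟩
    -- a uniform lower bound on distances to sheep outside the cluster
    have hevext : ∃ r : ℝ, 0 < r ∧
        ∀ᶠ t in L, ∀ k ∈ C, ∀ l ∉ C, r ≤ ‖x k t - x l t‖ := by
      set P : Finset (Fin N × Fin N) := C ×ˢ Cᶜ with hPdef
      by_cases hP : P.Nonempty
      · set r : ℝ := (P.inf' hP fun pr => ‖x pr.1 t₁ - x pr.2 t₁‖) / 2 with hrdef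
        have hposall : ∀ pr ∈ P, 0 < ‖x pr.1 t₁ - x pr.2 t₁‖ := by
          rintro ⟨k, l⟩ hkl
          rw [hPdef, Finset.mem_product] at hkl
          have hk := (hmemC k).1 hkl.1
          have hl : ¬ (x l t₁ = x i0 t₁) := by
            intro h; exact (Finset.mem_compl.1 hkl.2) ((hmemC l).2 h)
          rw [norm_pos_iff, sub_ne_zero]
          intro h; exact hl (h ▸ hk)
        have hr0 : 0 < r := by
          rw [hrdef]
          have : 0 < P.inf' hP fun pr => ‖x pr.1 t₁ - x pr.2 t₁‖ :=
            (Finset.lt_inf'_iff hP).2 hposall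
          linarith
        refine ⟨r, hr0, ?_⟩
        have hev : ∀ᶠ t in L, ∀ pr ∈ P, r ≤ ‖x pr.1 t - x pr.2 t‖ := by
          rw [Filter.eventually_all_finset]
          rintro ⟨k, l⟩ hkl
          have htend : Filter.Tendsto (fun t => ‖x k t - x l t‖) L
              (nhds ‖x k t₁ - x l t₁‖) :=
            ((tendsto_vals k).sub (tendsto_vals l)).norm
          apply htend.eventually (eventually_ge_nhds ?_)
          have h1 : 2 * r ≤ ‖x k t₁ - x l t₁‖ := by
            rw [hrdef]
            have := Finset.inf'_le (fun pr => ‖x pr.1 t₁ - x pr.2 t₁‖) hkl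
            linarith
          linarith
        filter_upwards [hev] with t ht k hk l hl
        exact ht (k, l) (by rw [hPdef, Finset.mem_product]; exact ⟨hk, Finset.mem_compl.2 hl⟩)
      · refine ⟨1, one_pos, Filter.Eventually.of_forall fun t k hk l hl => ?_⟩
        exact absurd ⟨(k,l), by rw [hPdef, Finset.mem_product]; exact ⟨hk, Finset.mem_compl.2 hl⟩⟩ hP
    obtain ⟨r, hr0, hevr⟩ := hevext
    set Mb : ℝ := mb / lb with hMbdef
    set F : ℝ := γ1 / ly with hFdef
    have hMF : 0 < Mb - F := by rw [hMbdef, hFdef] at *; linarith [hforce]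
    set K : ℝ := mb / r ^ 2 + 2 * (mb / lb) / r with hKdef
    have hK0 : 0 ≤ K := by rw [hKdef]; positivity
    have hNK : (0:ℝ) ≤ (N:ℝ) * (ma + K) := by positivity
    set ε : ℝ := min lb (2 * (Mb - F) / ((N:ℝ) * (ma + K) + 1)) with hεdef
    have hε0 : 0 < ε := by
      rw [hεdef]
      apply lt_min hlb
      positivity
    have hεlb : ε ≤ lb := min_le_left _ _
    have hsmall : (N:ℝ) * (ma + K) * ε + 2 * (γ1 / ly) ≤ 2 * (mb / lb) := by
      have h1 : ε ≤ 2 * (Mb - F) / ((N:ℝ) * (ma + K) + 1) := min_le_right _ _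
      have h2 : (N:ℝ) * (ma + K) * ε
          ≤ (N:ℝ) * (ma + K) * (2 * (Mb - F) / ((N:ℝ) * (ma + K) + 1)) :=
        mul_le_mul_of_nonneg_left h1 hNK
      have h3 : ((N:ℝ) * (ma + K)) * (2 * (Mb - F) / ((N:ℝ) * (ma + K) + 1)) ≤ 2 * (Mb - F) := by
        rw [mul_div_assoc', div_le_iff₀ (by positivity)]
        nlinarith [hMF, hNK]
      have h4 : (N:ℝ) * (ma + K) * ε ≤ 2 * (Mb - F) := le_trans h2 h3
      have h5 : Mb = mb / lb := hMbdef
      have h6 : F = γ1 / ly := hFdef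
      rw [h5, h6] at h4
      linarith
    have hevε : ∀ᶠ t in L, ∀ k ∈ C, ∀ l ∈ C, ‖x k t - x l t‖ ≤ ε := by
      have hall : ∀ᶠ t in L, ∀ pr ∈ C ×ˢ C, ‖x pr.1 t - x pr.2 t‖ ≤ ε := by
        rw [Filter.eventually_all_finset]
        rintro ⟨k, l⟩ hkl
        rw [Finset.mem_product] at hkl
        have hk := (hmemC k).1 hkl.1
        have hl := (hmemC l).1 hkl.2
        have htend : Filter.Tendsto (fun t => ‖x k t - x l t‖) L (nhds 0) := by
          have h0 : ‖x k t₁ - x l t₁‖ = 0 := by rw [hk, hl, sub_self, norm_zero]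
          have h1 := ((tendsto_vals k).sub (tendsto_vals l)).norm
          rwa [h0] at h1
        exact htend.eventually (eventually_le_nhds hε0)
      filter_upwards [hall] with t ht k hk l hl
      exact ht (k, l) (Finset.mem_product.2 ⟨hk, hl⟩)
    -- choose a good interval (a, t₁)
    obtain ⟨a, ha, hgoodt⟩ : ∃ a : ℝ, a < t₁ ∧ ∀ t ∈ Set.Ioo a t₁,
        ((∀ k ∈ C, ∀ l ∉ C, r ≤ ‖x k t - x l t‖) ∧
         (∀ k ∈ C, ∀ l ∈ C, ‖x k t - x l t‖ ≤ ε)) := by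
      have hev2 := hevr.and hevε
      rw [hLdef, Filter.eventually_iff, mem_nhdsLT_iff_exists_Ioo_subset] at hev2
      obtain ⟨a, ha, hsub⟩ := hev2
      exact ⟨a, ha, fun t ht => hsub ht⟩
    set t₀ : ℝ := (max a 0 + t₁) / 2 with ht₀def
    have hmax_lt : max a 0 < t₁ := max_lt ha ht₁pos
    have ht₀lt : t₀ < t₁ := by rw [ht₀def]; linarith [le_max_right a 0]
    have ht₀gt : max a 0 < t₀ := by rw [ht₀def]; linarith
    have ht₀pos : 0 < t₀ := lt_of_le_of_lt (le_max_right a 0) ht₀gt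
    have ht₀a : a < t₀ := lt_of_le_of_lt (le_max_left a 0) ht₀gt
    set vel : Fin N → ℝ → E2 := fun i t =>
      (∑ j ∈ Finset.univ.filter (· ≠ i), phiA ma (x i t - x j t)) +
      (∑ j ∈ Finset.univ.filter (· ≠ i), phiB mb lb (x i t - x j t)) +
      fy γ1 ly (x i t) (y t) with hveldef
    set W : ℝ → ℝ := fun t => ∑ i ∈ C, ∑ j ∈ C, ‖x i t - x j t‖ ^ 2 with hWdef
    set D : ℝ → ℝ := fun t => ∑ i ∈ C, ∑ j ∈ C,
      (2 : ℝ) * ⟪x i t - x j t, vel i t - vel j t⟫ with hDdef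
    have hW' : ∀ t : ℝ, 0 ≤ t → t < t₁ → HasDerivWithinAt W (D t) (Set.Ici 0) t := by
      intro t ht htlt
      have hdis := hsep t ht htlt
      have hx' : ∀ i : Fin N, HasDerivWithinAt (x i) (vel i t) (Set.Ici 0) t :=
        fun i => hdyn i t ht hdis
      rw [hWdef, hDdef]
      apply HasDerivWithinAt.fun_sum
      intro i _
      apply HasDerivWithinAt.fun_sum
      intro j _
      have hu : HasDerivWithinAt (fun s => x i s - x j s) (vel i t - vel j t) (Set.Ici 0) t :=
        (hx' i).sub (hx' j)
      have h1 := HasDerivWithinAt.inner ℝ hu hu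
      have h2 : (fun s => (⟪x i s - x j s, x i s - x j s⟫ : ℝ))
          = fun s => ‖x i s - x j s‖ ^ 2 :=
        funext fun s => real_inner_self_eq_norm_sq _
      rw [h2] at h1
      refine h1.congr_deriv ?_
      rw [real_inner_comm (x i t - x j t) (vel i t - vel j t)]
      ring
    have hD0 : ∀ t : ℝ, t₀ ≤ t → t < t₁ → 0 ≤ D t := by
      intro t ht htlt
      have htpos : 0 < t := lt_of_lt_of_le ht₀pos ht
      have htg := hgoodt t ⟨lt_of_lt_of_le ht₀a ht, htlt⟩
      have hdis := hsep t htpos.le htlt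
      have hextt : ∀ i ∈ C, ∀ j ∈ C, ∀ k ∉ C,
          ‖phiB mb lb (x i t - x k t) - phiB mb lb (x j t - x k t)‖
            ≤ K * ‖x i t - x j t‖ := by
        intro i hi j hj k hk
        have h1 : r ≤ ‖x i t - x k t‖ := htg.1 i hi k hk
        have h2 : r ≤ ‖x j t - x k t‖ := htg.1 j hj k hk
        have h3 := phiB_lip mb lb r hmb hlb hr0 (x i t - x k t) (x j t - x k t) h1 h2
        have he : (x i t - x k t) - (x j t - x k t) = x i t - x j t := by abel
        rw [he] at h3
        rw [hKdef]
        exact h3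
      have hcore := core_ineq N ma mb lb γ1 ly hma hmb hlb hγ1 hly hly1
        (fun k => x k t) (y t) hdis C hC2 K ε hK0 hε0 hεlb hsmall
        (fun i hi j hj => htg.2 i hi j hj) hextt
      have hsum2 : D t
          = 2 * ∑ i ∈ C, ∑ j ∈ C, (⟪x i t - x j t, vel i t - vel j t⟫ : ℝ) := by
        rw [hDdef]
        simp only
        rw [Finset.mul_sum]
        exact Finset.sum_congr rfl fun i _ => (Finset.mul_sum _ _ _).symm
      rw [hsum2]
      have hcore' : (0:ℝ) ≤ ∑ i ∈ C, ∑ j ∈ C, (⟪x i t - x j t, vel i t - vel j t⟫ : ℝ) := hcore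
      linarith
    have hmono : ∀ s : ℝ, t₀ < s → s < t₁ → W t₀ ≤ W s := by
      intro s hs hst
      have hconv : Convex ℝ (Set.Icc t₀ s) := convex_Icc _ _
      have hsubIci : Set.Icc t₀ s ⊆ Set.Ici (0:ℝ) := fun u hu => le_trans ht₀pos.le hu.1
      have hWcont : ContinuousOn W (Set.Icc t₀ s) := by
        intro u hu
        have hu1 : (0:ℝ) ≤ u := hsubIci hu
        have hu2 : u < t₁ := lt_of_le_of_lt hu.2 hst
        exact ((hW' u hu1 hu2).continuousWithinAt).mono hsubIci
      have hWdiffble : DifferentiableOn ℝ W (interior (Set.Icc t₀ s)) := by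
        rw [interior_Icc]
        intro u hu
        have hu0 : 0 < u := lt_trans ht₀pos hu.1
        have hu2 : u < t₁ := lt_trans hu.2 hst
        exact (((hW' u hu0.le hu2).hasDerivAt
          (Ici_mem_nhds hu0)).differentiableAt).differentiableWithinAt
      have hderiv : ∀ u ∈ interior (Set.Icc t₀ s), 0 ≤ deriv W u := by
        rw [interior_Icc]
        intro u hu
        have hu0 : 0 < u := lt_trans ht₀pos hu.1
        have hu2 : u < t₁ := lt_trans hu.2 hst
        have hd := (hW' u hu0.le hu2).hasDerivAt (Ici_mem_nhds hu0)
        rw [hd.deriv]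
        exact hD0 u (le_of_lt hu.1) hu2
      exact monotoneOn_of_deriv_nonneg hconv hWcont hWdiffble hderiv
        (Set.left_mem_Icc.2 (le_of_lt hs)) (Set.right_mem_Icc.2 (le_of_lt hs)) (le_of_lt hs)
    have hWt₀ : 0 < W t₀ := by
      have hdis := hsep t₀ ht₀pos.le ht₀lt
      have hterm : 0 < ‖x i0 t₀ - x j0 t₀‖ ^ 2 := by
        have hne : x i0 t₀ ≠ x j0 t₀ := hdis i0 j0 hij0
        have h1 : 0 < ‖x i0 t₀ - x j0 t₀‖ := by
          rw [norm_pos_iff, sub_ne_zero]; exact hne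
        positivity
      rw [hWdef]
      have hnn : ∀ i ∈ C, (0:ℝ) ≤ ∑ j ∈ C, ‖x i t₀ - x j t₀‖ ^ 2 :=
        fun i _ => Finset.sum_nonneg fun j _ => sq_nonneg _
      calc (0:ℝ) < ‖x i0 t₀ - x j0 t₀‖ ^ 2 := hterm
        _ ≤ ∑ j ∈ C, ‖x i0 t₀ - x j t₀‖ ^ 2 :=
            Finset.single_le_sum (f := fun j => ‖x i0 t₀ - x j t₀‖ ^ 2)
              (fun j _ => sq_nonneg _) hj0C
        _ ≤ ∑ i ∈ C, ∑ j ∈ C, ‖x i t₀ - x j t₀‖ ^ 2 :=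
            Finset.single_le_sum (f := fun i => ∑ j ∈ C, ‖x i t₀ - x j t₀‖ ^ 2) hnn hi0C
    have hW0 : Filter.Tendsto W L (nhds 0) := by
      have h1 : Filter.Tendsto W L (nhds (∑ i ∈ C, ∑ j ∈ C, ‖x i t₁ - x j t₁‖ ^ 2)) := by
        rw [hWdef]
        apply tendsto_finset_sum
        intro i _
        apply tendsto_finset_sum
        intro j _
        exact (((tendsto_vals i).sub (tendsto_vals j)).norm).pow 2
      have hzero : ∑ i ∈ C, ∑ j ∈ C, ‖x i t₁ - x j t₁‖ ^ 2 = 0 := by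
        apply Finset.sum_eq_zero
        intro i hi
        apply Finset.sum_eq_zero
        intro j hj
        rw [(hmemC i).1 hi, (hmemC j).1 hj, sub_self, norm_zero]
        norm_num
      rwa [hzero] at h1
    have hev1 : ∀ᶠ t in L, W t < W t₀ := hW0.eventually (eventually_lt_nhds hWt₀)
    have hev2 : ∀ᶠ t in L, t ∈ Set.Ioo t₀ t₁ := by
      rw [hLdef, Filter.eventually_iff, mem_nhdsWithin]
      exact ⟨Set.Ioi t₀, isOpen_Ioi, ht₀lt, fun u hu => ⟨hu.1, hu.2⟩⟩
    obtain ⟨t, hlt, hIoo⟩ := (hev1.and hev2).exists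
    exact absurd (hmono t hIoo.1 hIoo.2) (not_le.2 hlt)
  refine ⟨?_, main⟩
  rintro ⟨t₁, ht₁, hsep1, hdyn1, i, j, hij, p, hpi, hpj, hall⟩
  haveI : (nhdsWithin t₁ (Set.Iio t₁)).NeBot := nhdsLT_neBot t₁
  have hLle : nhdsWithin t₁ (Set.Iio t₁) ≤ nhdsWithin t₁ (Set.Ici 0) := by
    rw [nhdsWithin_le_iff, mem_nhdsWithin]
    exact ⟨Set.Ioi 0, isOpen_Ioi, ht₁, fun s hs => Set.mem_Ici.2 (le_of_lt hs.1)⟩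
  have hti : Filter.Tendsto (x i) (nhdsWithin t₁ (Set.Iio t₁)) (nhds (x i t₁)) :=
    Filter.Tendsto.mono_left ((hcont i) t₁ ht₁.le) hLle
  have htj : Filter.Tendsto (x j) (nhdsWithin t₁ (Set.Iio t₁)) (nhds (x j t₁)) :=
    Filter.Tendsto.mono_left ((hcont j) t₁ ht₁.le) hLle
  have hip : x i t₁ = p := tendsto_nhds_unique hti hpi
  have hjp : x j t₁ = p := tendsto_nhds_unique htj hpj
  exact main t₁ ht₁ i j hij (by rw [hip, hjp])



end
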